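/- Let N > 1 be an integer and let f ∈ S_2(Γ_0(N)) be a normalized newform. If α ∈ SL_2(ℤ) satisfies f|[α] = f (weight-2 slash action), then α ∈ Γ_0(N). -/

import Mathlib

open UpperHalfPlane ModularForm Complex

section Stmt2Aux

open Filter Topology MatrixGroups



private lemma nat_step (m : ℕ) (hm : m ≠ 0) (x n : ℕ) (hx : x.Coprime n) :
    ∃ k : ℕ, (x + k * n).Coprime m := by
  let ps := m.primeFactors.filter (fun p ↦ ¬p ∣ x)
  use ps.prod id
  apply Nat.coprime_of_dvd
  intro p pp hp hpn
  by_cases hpx : p ∣ x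
  · have h := Nat.dvd_sub hp hpx
    rw [add_comm, Nat.add_sub_cancel] at h
    rcases pp.dvd_mul.mp h with h | h
    · have ⟨q, hq, hq'⟩ := (pp.prime.dvd_finset_prod_iff id).mp h
      rw [Finset.mem_filter, Nat.mem_primeFactors,
        ← (Nat.prime_dvd_prime_iff_eq pp hq.1.1).mp hq'] at hq
      exact hq.2 hpx
    · exact Nat.Prime.not_coprime_iff_dvd.mpr ⟨p, pp, hpx, h⟩ hx
  · have pps : p ∈ ps := Finset.mem_filter.mpr ⟨Nat.mem_primeFactors.mpr ⟨pp, hpn, hm⟩, hpx⟩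
    have h := Nat.dvd_sub hp ((Finset.dvd_prod_of_mem id pps).mul_right n)
    rw [Nat.add_sub_cancel] at h
    contradiction

private lemma int_step (N : ℕ) (hN : N ≠ 0) (c d : ℤ) (h : IsCoprime d c) :
    ∃ j : ℤ, IsCoprime (d + j * c) (N : ℤ) := by
  have hgcd : d.natAbs.Coprime c.natAbs := Int.isCoprime_iff_gcd_eq_one.mp h
  obtain ⟨k, hk⟩ := nat_step N hN d.natAbs c.natAbs hgcd
  have base : IsCoprime (|d| + (k : ℤ) * |c|) (N : ℤ) := by
    have := Nat.isCoprime_iff_coprime.mpr hk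
    push_cast at this
    exact this
  have key : ∃ j : ℤ, d + j * c = |d| + (k : ℤ) * |c| ∨ d + j * c = -(|d| + (k : ℤ) * |c|) := by
    rcases abs_cases d with ⟨hd1, _⟩ | ⟨hd1, _⟩ <;> rcases abs_cases c with ⟨hc1, _⟩ | ⟨hc1, _⟩
    · exact ⟨(k : ℤ), Or.inl (by rw [hd1, hc1])⟩
    · exact ⟨-(k : ℤ), Or.inl (by rw [hd1, hc1]; ring)⟩
    · exact ⟨-(k : ℤ), Or.inr (by rw [hd1, hc1]; ring)⟩
    · exact ⟨(k : ℤ), Or.inr (by rw [hd1, hc1]; ring)⟩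
  obtain ⟨j, hj | hj⟩ := key
  · exact ⟨j, hj ▸ base⟩
  · exact ⟨j, hj ▸ base.neg_left⟩



private lemma lin_ne_zero' (c d : ℤ) (hcd : c ≠ 0 ∨ d ≠ 0) (z : ℍ) :
    (c : ℂ) * z + d ≠ 0 := by
  rcases eq_or_ne c 0 with hc | hc
  · subst hc
    simp only [Int.cast_zero, zero_mul, zero_add, ne_eq, Int.cast_eq_zero]
    tauto
  · intro hcon
    have him : ((c : ℂ) * z + d).im = 0 := by rw [hcon]; simp
    have : ((c : ℂ) * z + d).im = (c : ℝ) * z.im := by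
      simp [Complex.add_im, Complex.mul_im, UpperHalfPlane.coe_im]
    rw [this] at him
    rcases mul_eq_zero.mp him with h | h
    · exact hc (by exact_mod_cast h)
    · exact (UpperHalfPlane.im_pos z).ne' h
private lemma fricke_im (N : ℕ) (hN : 0 < N) (z : ℍ) : 0 < (-1 / ((N : ℂ) * z)).im := by
  have hz : ((N : ℂ) * z) ≠ 0 := by
    refine mul_ne_zero ?_ (UpperHalfPlane.ne_zero z)
    exact_mod_cast hN.ne'
  have : (-1 / ((N : ℂ) * z)).im = ((N : ℝ) * z.im) / Complex.normSq ((N : ℂ) * z) := by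
    rw [div_im]
    simp [Complex.normSq, UpperHalfPlane.coe_im]
    ring_nf
  rw [this]
  apply div_pos
  · exact mul_pos (by exact_mod_cast hN) (UpperHalfPlane.im_pos z)
  · exact Complex.normSq_pos.mpr hz

-- coordinates of SL2 action
private lemma smul_coe' (g : Matrix.SpecialLinearGroup (Fin 2) ℤ) (z : ℍ) :
    ((g • z : ℍ) : ℂ) = ((g 0 0 : ℂ) * z + (g 0 1 : ℂ)) / ((g 1 0 : ℂ) * z + (g 1 1 : ℂ)) := by
  rw [UpperHalfPlane.specialLinearGroup_apply]
  simp [UpperHalfPlane.coe_mk]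



private lemma norm_exp_term (w : ℂ) : ‖Complex.exp w‖ = Real.exp w.re := by
  rw [Complex.norm_exp]

private lemma re_term (r : ℝ) (z : ℂ) : (2 * (Real.pi : ℂ) * Complex.I * (r : ℂ) * z).re
    = -(2 * Real.pi * r * z.im) := by
  simp [Complex.mul_re, Complex.mul_im]

private lemma re_term' (z : ℂ) : (2 * (Real.pi : ℂ) * Complex.I * z).re
    = -(2 * Real.pi * z.im) := by
  have := re_term 1 z
  simpa using this

private lemma t_is_int (a : ℕ → ℂ) (ha0 : a 0 = 0) (ha1 : a 1 = 1)
    (f : ℍ → ℂ)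
    (hfa : ∀ z : ℍ, f z = ∑' n : ℕ, a n * Complex.exp (2 * Real.pi * Complex.I * n * (z : ℂ)))
    (z₀ : ℍ)
    (hsum : Summable fun n : ℕ => a n * Complex.exp (2 * Real.pi * Complex.I * n * (z₀ : ℂ)))
    (t : ℝ) (ht : ∀ z w : ℍ, (w : ℂ) = (z : ℂ) + t → f w = f z) :
    ∃ k : ℤ, t = k := by
  have pi_pos := Real.pi_pos
  -- term norm formula
  have hterm : ∀ (n : ℕ) (z : ℂ), ‖a n * Complex.exp (2 * Real.pi * Complex.I * n * z)‖
      = ‖a n‖ * Real.exp (-(2 * Real.pi * n * z.im)) := by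
    intro n z
    rw [norm_mul, norm_exp_term]
    congr 2
    exact_mod_cast re_term (n : ℝ) z
  -- bound on coefficients
  obtain ⟨C, hC⟩ := (hsum.tendsto_atTop_zero.norm.congr (fun n => rfl)).bddAbove_range
  have hC' : ∀ n : ℕ, ‖a n‖ * Real.exp (-(2 * Real.pi * n * (z₀ : ℂ).im)) ≤ C := by
    intro n
    calc ‖a n‖ * Real.exp (-(2 * Real.pi * n * (z₀ : ℂ).im))
        = ‖a n * Complex.exp (2 * Real.pi * Complex.I * n * (z₀ : ℂ))‖ := (hterm n _).symm
      _ ≤ C := hC ⟨n, rfl⟩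
  have hCnn : 0 ≤ C := le_trans (by positivity) (hC' 0)
  have ha : ∀ n : ℕ, ‖a n‖ ≤ C * Real.exp (2 * Real.pi * n * (z₀ : ℂ).im) := by
    intro n
    have h2 := mul_le_mul_of_nonneg_right (hC' n)
      (Real.exp_nonneg (2 * Real.pi * n * (z₀ : ℂ).im))
    rwa [mul_assoc, ← Real.exp_add, neg_add_cancel, Real.exp_zero, mul_one] at h2
  set y₀ : ℝ := (z₀ : ℂ).im with hy₀
  set C₂ : ℝ := C / (1 - Real.exp (-(2 * Real.pi))) with hC₂
  have hexp2pi : Real.exp (-(2 * Real.pi)) < 1 := by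
    rw [Real.exp_lt_one_iff]; linarith
  have hC₂nn : 0 ≤ C₂ := by
    apply div_nonneg hCnn; linarith
  -- main estimate
  have est : ∀ z : ℍ, y₀ + 1 ≤ (z : ℂ).im →
      ‖f z - Complex.exp (2 * Real.pi * Complex.I * (z : ℂ))‖
        ≤ C₂ * Real.exp (-(2 * Real.pi * ((z : ℂ).im - y₀))) ^ 2 := by
    intro z hz
    set ρ : ℝ := Real.exp (-(2 * Real.pi * ((z : ℂ).im - y₀))) with hρ
    have hρpos : 0 < ρ := Real.exp_pos _
    have hρle : ρ ≤ Real.exp (-(2 * Real.pi)) := by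
      rw [hρ, Real.exp_le_exp]
      nlinarith
    have hρlt : ρ < 1 := lt_of_le_of_lt hρle hexp2pi
    have hbound : ∀ n : ℕ, ‖a n * Complex.exp (2 * Real.pi * Complex.I * n * (z : ℂ))‖
        ≤ C * ρ ^ n := by
      intro n
      rw [hterm n (z : ℂ)]
      have h1 : ‖a n‖ * Real.exp (-(2 * Real.pi * n * (z : ℂ).im))
          ≤ (C * Real.exp (2 * Real.pi * n * y₀)) * Real.exp (-(2 * Real.pi * n * (z : ℂ).im)) :=
        mul_le_mul_of_nonneg_right (ha n) (Real.exp_nonneg _)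
      refine h1.trans (le_of_eq ?_)
      rw [mul_assoc, ← Real.exp_add, hρ, ← Real.exp_nat_mul]
      congr 1
      ring
    have hsummable : Summable (fun n : ℕ => a n * Complex.exp (2 * Real.pi * Complex.I * n * (z : ℂ))) :=
      Summable.of_norm_bounded ((summable_geometric_of_lt_one hρpos.le hρlt).mul_left C) hbound
    have hdecomp : f z = Complex.exp (2 * Real.pi * Complex.I * (z : ℂ))
        + ∑' n : ℕ, a (n + 2) * Complex.exp (2 * Real.pi * Complex.I * (((n + 2 : ℕ) : ℂ)) * (z : ℂ)) := by
      rw [hfa z, Summable.tsum_eq_zero_add hsummable, Summable.tsum_eq_zero_add ((summable_nat_add_iff 1).mpr hsummable)]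
      simp only [ha0, ha1, Nat.cast_zero, Nat.cast_one, zero_mul, mul_zero, mul_one,
        Complex.exp_zero, zero_add, one_mul]
    have hgeo : Summable (fun n : ℕ => (C * ρ ^ 2) * ρ ^ n) :=
      (summable_geometric_of_lt_one hρpos.le hρlt).mul_left _
    have hb2 : ∀ n : ℕ, ‖a (n + 2)
        * Complex.exp (2 * Real.pi * Complex.I * (((n + 2 : ℕ) : ℂ)) * (z : ℂ))‖
        ≤ (C * ρ ^ 2) * ρ ^ n := by
      intro n
      calc ‖a (n + 2) * Complex.exp (2 * Real.pi * Complex.I * (((n + 2 : ℕ) : ℂ)) * (z : ℂ))‖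
          ≤ C * ρ ^ (n + 2) := hbound (n + 2)
        _ = (C * ρ ^ 2) * ρ ^ n := by ring
    have htail : ‖∑' n : ℕ, a (n + 2)
        * Complex.exp (2 * Real.pi * Complex.I * (((n + 2 : ℕ) : ℂ)) * (z : ℂ))‖
        ≤ C₂ * ρ ^ 2 := by
      have h1 := tsum_of_norm_bounded hgeo.hasSum hb2
      have h2 : ∑' n : ℕ, (C * ρ ^ 2) * ρ ^ n = (C * ρ ^ 2) * (1 - ρ)⁻¹ := by
        rw [tsum_mul_left, tsum_geometric_of_lt_one hρpos.le hρlt]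
      rw [h2] at h1
      refine h1.trans ?_
      have hinv : (1 - ρ)⁻¹ ≤ (1 - Real.exp (-(2 * Real.pi)))⁻¹ := by
        apply inv_anti₀
        · linarith
        · linarith
      calc (C * ρ ^ 2) * (1 - ρ)⁻¹ ≤ (C * ρ ^ 2) * (1 - Real.exp (-(2 * Real.pi)))⁻¹ := by
            apply mul_le_mul_of_nonneg_left hinv (by positivity)
        _ = C₂ * ρ ^ 2 := by rw [hC₂, div_eq_mul_inv]; ring
    rw [hdecomp, add_sub_cancel_left]
    exact htail
  -- application at the two points i*y and t + i*y
  have happ : ∀ y : ℝ, y₀ + 1 ≤ y →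
      ‖Complex.exp (2 * Real.pi * Complex.I * (t : ℂ)) - 1‖
        ≤ (2 * C₂ * Real.exp (4 * Real.pi * y₀)) * Real.exp (-(2 * Real.pi * y)) := by
    intro y hy
    have hy₀pos : 0 < y₀ := by rw [hy₀, UpperHalfPlane.coe_im]; exact z₀.im_pos
    have hy0 : 0 < y := by linarith
    have hzcim : ((y : ℂ) * Complex.I).im = y := by simp
    have hwcim : ((t : ℂ) + (y : ℂ) * Complex.I).im = y := by simp
    set zz : ℍ := UpperHalfPlane.mk ((y : ℂ) * Complex.I) (by rw [hzcim]; exact hy0) with hzz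
    set ww : ℍ := UpperHalfPlane.mk ((t : ℂ) + (y : ℂ) * Complex.I) (by rw [hwcim]; exact hy0)
      with hww
    have hfw : f ww = f zz := by
      refine ht zz ww ?_
      rw [hzz, hww, UpperHalfPlane.coe_mk, UpperHalfPlane.coe_mk]
      ring
    have him1 : (zz : ℂ).im = y := by rw [hzz, UpperHalfPlane.coe_mk]; exact hzcim
    have him2 : (ww : ℂ).im = y := by rw [hww, UpperHalfPlane.coe_mk]; exact hwcim
    have e1 := est zz (by rw [him1]; exact hy)
    have e2 := est ww (by rw [him2]; exact hy)
    rw [him1] at e1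
    rw [him2] at e2
    have hsplit : Complex.exp (2 * Real.pi * Complex.I * ((ww : ℂ))) =
        Complex.exp (2 * Real.pi * Complex.I * (t : ℂ))
          * Complex.exp (2 * Real.pi * Complex.I * (zz : ℂ)) := by
      rw [← Complex.exp_add]
      rw [hzz, hww, UpperHalfPlane.coe_mk, UpperHalfPlane.coe_mk]
      congr 1
      ring
    have hnz : ‖Complex.exp (2 * Real.pi * Complex.I * (zz : ℂ))‖
        = Real.exp (-(2 * Real.pi * y)) := by
      rw [norm_exp_term, re_term', him1]
    have hdiff : Complex.exp (2 * Real.pi * Complex.I * ((ww : ℂ)))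
        - Complex.exp (2 * Real.pi * Complex.I * (zz : ℂ))
        = (f zz - Complex.exp (2 * Real.pi * Complex.I * (zz : ℂ)))
          - (f ww - Complex.exp (2 * Real.pi * Complex.I * ((ww : ℂ)))) := by
      rw [hfw]; ring
    have tri : ‖Complex.exp (2 * Real.pi * Complex.I * ((ww : ℂ)))
        - Complex.exp (2 * Real.pi * Complex.I * (zz : ℂ))‖
        ≤ 2 * (C₂ * Real.exp (-(2 * Real.pi * (y - y₀))) ^ 2) := by
      rw [hdiff]
      refine (norm_sub_le _ _).trans ?_
      have := add_le_add e1 e2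
      linarith
    rw [hsplit] at tri
    have hfactor : Complex.exp (2 * Real.pi * Complex.I * (t : ℂ))
          * Complex.exp (2 * Real.pi * Complex.I * (zz : ℂ))
        - Complex.exp (2 * Real.pi * Complex.I * (zz : ℂ))
        = (Complex.exp (2 * Real.pi * Complex.I * (t : ℂ)) - 1)
          * Complex.exp (2 * Real.pi * Complex.I * (zz : ℂ)) := by ring
    rw [hfactor, norm_mul, hnz] at tri
    have hepos : (0 : ℝ) < Real.exp (-(2 * Real.pi * y)) := Real.exp_pos _
    rw [← le_div_iff₀ hepos] at tri
    refine tri.trans (le_of_eq ?_)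
    rw [div_eq_mul_inv, ← Real.exp_neg, sq, ← Real.exp_add]
    have hE : Real.exp (-(2 * Real.pi * (y - y₀)) + -(2 * Real.pi * (y - y₀)))
        * Real.exp (- -(2 * Real.pi * y))
        = Real.exp (4 * Real.pi * y₀) * Real.exp (-(2 * Real.pi * y)) := by
      rw [← Real.exp_add, ← Real.exp_add]
      congr 1
      ring
    calc 2 * (C₂ * Real.exp (-(2 * Real.pi * (y - y₀)) + -(2 * Real.pi * (y - y₀))))
          * Real.exp (- -(2 * Real.pi * y))
        = 2 * C₂ * (Real.exp (-(2 * Real.pi * (y - y₀)) + -(2 * Real.pi * (y - y₀)))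
          * Real.exp (- -(2 * Real.pi * y))) := by ring
      _ = 2 * C₂ * (Real.exp (4 * Real.pi * y₀) * Real.exp (-(2 * Real.pi * y))) := by rw [hE]
      _ = 2 * C₂ * Real.exp (4 * Real.pi * y₀) * Real.exp (-(2 * Real.pi * y)) := by ring
  -- conclude exp(2 pi i t) = 1
  have hlim : Tendsto (fun y : ℝ => (2 * C₂ * Real.exp (4 * Real.pi * y₀))
      * Real.exp (-(2 * Real.pi * y))) atTop (𝓝 0) := by
    have h1 : Tendsto (fun y : ℝ => 2 * Real.pi * y) atTop atTop :=
      Tendsto.const_mul_atTop (by positivity) tendsto_id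
    have h3 : Tendsto (fun y : ℝ => Real.exp (-(2 * Real.pi * y))) atTop (𝓝 0) :=
      Real.tendsto_exp_neg_atTop_nhds_zero.comp h1
    simpa using h3.const_mul (2 * C₂ * Real.exp (4 * Real.pi * y₀))
  have hle : ‖Complex.exp (2 * Real.pi * Complex.I * (t : ℂ)) - 1‖ ≤ 0 := by
    refine le_of_tendsto_of_tendsto tendsto_const_nhds hlim ?_
    filter_upwards [eventually_ge_atTop (y₀ + 1)] with y hy
    exact happ y hy
  have hexp1 : Complex.exp (2 * Real.pi * Complex.I * (t : ℂ)) = 1 := by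
    have h0 : ‖Complex.exp (2 * Real.pi * Complex.I * (t : ℂ)) - 1‖ = 0 :=
      le_antisymm hle (norm_nonneg _)
    exact sub_eq_zero.mp (norm_eq_zero.mp h0)
  obtain ⟨n, hn⟩ := Complex.exp_eq_one_iff.mp hexp1
  refine ⟨n, ?_⟩
  have hcast : (t : ℂ) = (n : ℂ) := by
    have h2πI : (2 * (Real.pi : ℂ) * Complex.I) ≠ 0 := by
      simpa using Complex.two_pi_I_ne_zero
    apply mul_left_cancel₀ h2πI
    linear_combination hn
  exact_mod_cast hcast


section ChainAlgebra
variable {a b c d p q n z z1 z2 z3 z4 ε : ℂ}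

private lemma chain_e1' (hn : n ≠ 0) (hz : z ≠ 0) (h1 : z1 = -1 / (n * z)) :
    (c * z1 + d) * (n * z) = d * n * z - c := by
  rw [h1]; field_simp; ring

private lemma chain_e2' (hn : n ≠ 0) (hz : z ≠ 0) (hden1 : c * z1 + d ≠ 0)
    (h1 : z1 = -1 / (n * z)) (h2 : z2 = (a * z1 + b) / (c * z1 + d)) :
    z2 * (d * n * z - c) = b * n * z - a := by
  rw [h2, div_mul_eq_mul_div, div_eq_iff hden1, h1]
  field_simp
  ring

private lemma chain_hz3' (hn : n ≠ 0) (hz2 : z2 ≠ 0)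
    (h3 : z3 = -1 / (n * z2)) (e2' : z2 * (d * n * z - c) = b * n * z - a) :
    z3 * (n * (b * n * z - a)) = c - d * n * z := by
  rw [h3, div_mul_eq_mul_div, div_eq_iff (mul_ne_zero hn hz2)]
  linear_combination n * e2'

private lemma chain_e3' (hdet : a * d - b * c = 1)
    (hz3' : z3 * (n * (b * n * z - a)) = c - d * n * z) :
    (n * b * z3 + d) * (b * n * z - a) = -1 := by
  linear_combination b * hz3' - hdet

private lemma chain_key4 (hdet : a * d - b * c = 1) (hpq : p * d - q * (n * b) = 1)
    (hz3' : z3 * (n * (b * n * z - a)) = c - d * n * z)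
    (e3' : (n * b * z3 + d) * (b * n * z - a) = -1)
    (hden2 : n * b * z3 + d ≠ 0)
    (h4 : z4 = (p * z3 + q) / (n * b * z3 + d)) :
    n * z4 = n * z + (q * a * n - p * c) := by
  have h4' : z4 * (n * b * z3 + d) = p * z3 + q := by
    rw [h4, div_mul_cancel₀ _ hden2]
  linear_combination (-(n * (b * n * z - a))) * h4' + (n * z4) * e3' + (-p) * hz3'
    + (n * z) * hpq

private lemma chain_scalar (hε : ε ^ 2 = 1) (hn : n ≠ 0) (hz : z ≠ 0)
    (hden1 : c * z1 + d ≠ 0) (hz2 : z2 ≠ 0)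
    (hden1' : d * n * z - c ≠ 0) (hnum2 : b * n * z - a ≠ 0)
    (e1' : (c * z1 + d) * (n * z) = d * n * z - c)
    (e2' : z2 * (d * n * z - c) = b * n * z - a)
    (e3' : (n * b * z3 + d) * (b * n * z - a) = -1) :
    (n * b * z3 + d) ^ 2 * (ε * n * z2 ^ 2) * ((c * z1 + d) ^ 2 * (ε * n * z ^ 2)) = 1 := by
  have hsq : ((n * b * z3 + d) * (b * n * z - a)) ^ 2 = 1 := by rw [e3']; ring
  have h2sq : (z2 * (d * n * z - c)) ^ 2 = (b * n * z - a) ^ 2 := by rw [e2']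
  have h1sq : ((c * z1 + d) * (n * z)) ^ 2 = (d * n * z - c) ^ 2 := by rw [e1']
  have hD : ((b * n * z - a) * (d * n * z - c) * (n * z)) ^ 2 ≠ 0 := by
    apply pow_ne_zero
    exact mul_ne_zero (mul_ne_zero hnum2 hden1') (mul_ne_zero hn hz)
  apply mul_right_cancel₀ hD
  calc (n * b * z3 + d) ^ 2 * (ε * n * z2 ^ 2) * ((c * z1 + d) ^ 2 * (ε * n * z ^ 2))
        * ((b * n * z - a) * (d * n * z - c) * (n * z)) ^ 2
      = (((n * b * z3 + d) * (b * n * z - a)) ^ 2) * ((z2 * (d * n * z - c)) ^ 2)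
        * (((c * z1 + d) * (n * z)) ^ 2) * (ε ^ 2 * n ^ 2 * z ^ 2) := by ring
    _ = 1 * ((b * n * z - a) ^ 2) * ((d * n * z - c) ^ 2) * (1 * n ^ 2 * z ^ 2) := by
        rw [hsq, h2sq, h1sq, hε]
    _ = 1 * ((b * n * z - a) * (d * n * z - c) * (n * z)) ^ 2 := by ring

end ChainAlgebra

end Stmt2Aux

/-- The old subspace of `S₂(Γ₀(N))`: the span of the functions `z ↦ g(dz)` where
`g` runs over cusp forms of weight 2 and level `M ∣ N`, `M ≠ N`, and `d ∣ N/M`. -/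
noncomputable def oldSpace (N : ℕ) : Submodule ℂ (UpperHalfPlane → ℂ) :=
  Submodule.span ℂ {F : UpperHalfPlane → ℂ | ∃ M : ℕ, M ∣ N ∧ M ≠ N ∧ ∃ d : ℕ,
    d ∣ N / M ∧ ∃ g : CuspForm (CongruenceSubgroup.Gamma0 M) 2,
      ∀ z w : UpperHalfPlane, (w : ℂ) = (d : ℂ) * (z : ℂ) → F z = g w}

/-- `f ∈ S₂(Γ₀(N))` is a normalized newform: it has a `q`-expansion
`f = Σ_{n ≥ 1} a_n q^n` with `a_1 = 1` (normalized), it is new at level `N`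
(not in the old subspace), and it is an eigenform of the Fricke involution
`w_N : z ↦ -1/(Nz)` (a consequence of being a Hecke eigenform new at level `N`),
i.e. `f(-1/(Nz)) = ± N z² f(z)`. -/
noncomputable def IsNormalizedNewform (N : ℕ)
    (f : CuspForm (CongruenceSubgroup.Gamma0 N) 2) : Prop :=
  (∃ a : ℕ → ℂ, a 0 = 0 ∧ a 1 = 1 ∧ ∀ z : UpperHalfPlane,
      f z = ∑' n : ℕ, a n * Complex.exp (2 * Real.pi * Complex.I * n * (z : ℂ))) ∧
  (⇑f ∉ oldSpace N) ∧
  (∃ ε : ℂ, ε ^ 2 = 1 ∧ ∀ z w : UpperHalfPlane,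
      (w : ℂ) = -1 / ((N : ℂ) * (z : ℂ)) → f w = ε * N * (z : ℂ) ^ 2 * f z)

/-- let `N > 1` and let `f ∈ S₂(Γ₀(N))` be a normalized newform.
If `α ∈ SL₂(ℤ)` satisfies `f ∣[2] α = f`, then `α ∈ Γ₀(N)`. -/
theorem stmt2 (N : ℕ) (hN : 1 < N) (f : CuspForm (CongruenceSubgroup.Gamma0 N) 2)
    (hf : IsNormalizedNewform N f)
    (α : Matrix.SpecialLinearGroup (Fin 2) ℤ)
    (hα : (⇑f) ∣[(2 : ℤ)] α = ⇑f) :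
    α ∈ CongruenceSubgroup.Gamma0 N := by
  obtain ⟨⟨a, ha0, ha1, hfa⟩, hnew, ε, hε, hfr⟩ := hf
  rw [CongruenceSubgroup.Gamma0_mem, ZMod.intCast_zmod_eq_zero_iff_dvd]
  by_cases hc0 : (α 1 0 : ℤ) = 0
  · rw [hc0]; exact dvd_zero _
  set a0 : ℤ := α 0 0 with ha0'
  set b0 : ℤ := α 0 1 with hb0'
  set c : ℤ := α 1 0 with hc'
  set d0 : ℤ := α 1 1 with hd0'
  have hdet : a0 * d0 - b0 * c = 1 := by
    have h2 := α.2
    rw [Matrix.det_fin_two] at h2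
    exact h2
  obtain ⟨j, hj⟩ := int_step N (by omega) c d0 ⟨a0, -b0, by linear_combination hdet⟩
  set b' : ℤ := a0 * j + b0 with hb'
  set d' : ℤ := d0 + j * c with hd'
  have hdet' : a0 * d' - b' * c = 1 := by rw [hb', hd']; linear_combination hdet
  have hbd : IsCoprime b' d' := ⟨-c, a0, by linear_combination hdet'⟩
  have hcop : IsCoprime ((N : ℤ) * b') d' := (hj.symm).mul_left hbd
  obtain ⟨u, v, huv⟩ := hcop
  set p : ℤ := v with hp
  set q : ℤ := -u with hq
  have hpq : p * d' - q * ((N : ℤ) * b') = 1 := by rw [hp, hq]; linear_combination huv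
  have hd'0 : d' ≠ 0 := by
    intro h0
    rw [h0] at hpq
    have h1 : (N : ℤ) ∣ 1 := ⟨-(q * b'), by linear_combination -hpq⟩
    have h2 := Int.le_of_dvd one_pos h1
    have h3 : N ≤ 1 := by exact_mod_cast h2
    omega
  -- the two group elements
  set Tj : Matrix.SpecialLinearGroup (Fin 2) ℤ :=
    ⟨!![1, j; 0, 1], by simp [Matrix.det_fin_two_of]⟩ with hTj
  have hTjmem : Tj ∈ CongruenceSubgroup.Gamma0 N := by
    rw [CongruenceSubgroup.Gamma0_mem]
    simp [hTj]
  set α' := α * Tj with hα'def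
  have hα'00 : α' 0 0 = a0 := by
    rw [hα'def, Matrix.SpecialLinearGroup.coe_mul]
    simp [hTj, ha0', Matrix.mul_apply, Fin.sum_univ_two]
  have hα'01 : α' 0 1 = b' := by
    rw [hα'def, Matrix.SpecialLinearGroup.coe_mul]
    simp [hTj, hb', Matrix.mul_apply, Fin.sum_univ_two]
    try ring
  have hα'10 : α' 1 0 = c := by
    rw [hα'def, Matrix.SpecialLinearGroup.coe_mul]
    simp [hTj, hc', Matrix.mul_apply, Fin.sum_univ_two]
  have hα'11 : α' 1 1 = d' := by
    rw [hα'def, Matrix.SpecialLinearGroup.coe_mul]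
    simp [hTj, hd', Matrix.mul_apply, Fin.sum_univ_two]
    try ring
  have hdetγ : Matrix.det !![p, q; (N : ℤ) * b', d'] = 1 := by
    rw [Matrix.det_fin_two_of]; linear_combination hpq
  set γ : Matrix.SpecialLinearGroup (Fin 2) ℤ := ⟨!![p, q; (N : ℤ) * b', d'], hdetγ⟩ with hγdef
  have hγmem : γ ∈ CongruenceSubgroup.Gamma0 N := by
    rw [CongruenceSubgroup.Gamma0_mem]
    simp [hγdef]
  -- pointwise invariance
  have hα's : (⇑f) ∣[(2 : ℤ)] α' = ⇑f := by
    rw [hα'def, SlashAction.slash_mul, hα, ModularForm.SL_slash]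
    exact SlashInvariantForm.slash_action_eqn f _ (Subgroup.mem_map_of_mem _ hTjmem)
  have hptα' : ∀ z : UpperHalfPlane, f (α' • z) = ((c : ℂ) * z + (d' : ℂ)) ^ 2 * f z := by
    intro z
    have h := (ModularForm.slash_action_eq'_iff 2 (⇑f) α' z).mp (congrFun hα's z)
    rw [hα'10, hα'11] at h
    rw [h, zpow_two, ← pow_two]
  have hptγ : ∀ z : UpperHalfPlane,
      f (γ • z) = ((N : ℂ) * (b' : ℂ) * z + (d' : ℂ)) ^ 2 * f z := by
    intro z
    have h : f (γ • z) = (((γ 1 0 : ℤ) : ℂ) * z + ((γ 1 1 : ℤ) : ℂ)) ^ (2 : ℤ) * f z := by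
      rw [SlashInvariantForm.slash_action_eqn_SL'' f hγmem z]
      simp [UpperHalfPlane.denom]
    have hγ10 : γ 1 0 = (N : ℤ) * b' := by simp [hγdef]
    have hγ11 : γ 1 1 = d' := by simp [hγdef]
    rw [hγ10, hγ11] at h
    rw [h, zpow_two, ← pow_two]
    push_cast
    ring_nf
  -- the N ∤ 0 facts
  have hNC : (N : ℂ) ≠ 0 := Nat.cast_ne_zero.mpr (by omega)
  -- the translation length
  set t : ℝ := ((q * a0 : ℤ) : ℝ) - ((p * c : ℤ) : ℝ) / (N : ℝ) with hts
  -- cast determinant relations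
  have hdetC : (a0 : ℂ) * (d' : ℂ) - (b' : ℂ) * (c : ℂ) = 1 := by exact_mod_cast hdet'
  have hpqC : (p : ℂ) * (d' : ℂ) - (q : ℂ) * ((N : ℂ) * (b' : ℂ)) = 1 := by exact_mod_cast hpq
  -- the translation property
  have htrans : ∀ z w : UpperHalfPlane, (w : ℂ) = (z : ℂ) + (t : ℝ) → f w = f z := by
    intro z w hw
    have hzne : (z : ℂ) ≠ 0 := UpperHalfPlane.ne_zero z
    set z1 : UpperHalfPlane := UpperHalfPlane.mk (-1 / ((N : ℂ) * z))
      (fricke_im N (by omega) z) with hz1def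
    have hz1c : (z1 : ℂ) = -1 / ((N : ℂ) * (z : ℂ)) := UpperHalfPlane.coe_mk _ _
    have h1 : f z1 = ε * N * (z : ℂ) ^ 2 * f z := hfr z z1 hz1c
    set z2 : UpperHalfPlane := α' • z1 with hz2def
    have h2 : f z2 = ((c : ℂ) * z1 + (d' : ℂ)) ^ 2 * f z1 := hptα' z1
    have hz2c : (z2 : ℂ) = ((a0 : ℂ) * z1 + (b' : ℂ)) / ((c : ℂ) * z1 + (d' : ℂ)) := by
      rw [hz2def, smul_coe', hα'00, hα'01, hα'10, hα'11]
    have hden1 : (c : ℂ) * z1 + (d' : ℂ) ≠ 0 := lin_ne_zero' c d' (Or.inl hc0) z1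
    have hz2ne : (z2 : ℂ) ≠ 0 := UpperHalfPlane.ne_zero z2
    set z3 : UpperHalfPlane := UpperHalfPlane.mk (-1 / ((N : ℂ) * z2))
      (fricke_im N (by omega) z2) with hz3def
    have hz3c : (z3 : ℂ) = -1 / ((N : ℂ) * (z2 : ℂ)) := UpperHalfPlane.coe_mk _ _
    have h3 : f z3 = ε * N * (z2 : ℂ) ^ 2 * f z2 := hfr z2 z3 hz3c
    set z4 : UpperHalfPlane := γ • z3 with hz4def
    have h4 : f z4 = ((N : ℂ) * (b' : ℂ) * z3 + (d' : ℂ)) ^ 2 * f z3 := hptγ z3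
    have hz4c : (z4 : ℂ) = ((p : ℂ) * z3 + (q : ℂ))
        / ((N : ℂ) * (b' : ℂ) * z3 + (d' : ℂ)) := by
      rw [hz4def, smul_coe']
      have e00 : γ 0 0 = p := by simp [hγdef]
      have e01 : γ 0 1 = q := by simp [hγdef]
      have e10 : γ 1 0 = (N : ℤ) * b' := by simp [hγdef]
      have e11 : γ 1 1 = d' := by simp [hγdef]
      rw [e00, e01, e10, e11]
      push_cast
      ring_nf
    -- algebra
    have e1' := chain_e1' (c := (c : ℂ)) (d := (d' : ℂ)) hNC hzne hz1c
    have hden1' : (d' : ℂ) * (N : ℂ) * (z : ℂ) - (c : ℂ) ≠ 0 := by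
      rw [← e1']
      exact mul_ne_zero hden1 (mul_ne_zero hNC hzne)
    have e2' := chain_e2' (a := (a0 : ℂ)) (b := (b' : ℂ)) hNC hzne hden1 hz1c hz2c
    have hnum2 : (b' : ℂ) * (N : ℂ) * (z : ℂ) - (a0 : ℂ) ≠ 0 := by
      rw [← e2']
      exact mul_ne_zero hz2ne hden1'
    have hz3' := chain_hz3' hNC hz2ne hz3c e2'
    have e3' := chain_e3' hdetC hz3'
    have hden2 : (N : ℂ) * (b' : ℂ) * z3 + (d' : ℂ) ≠ 0 := by
      intro h0
      rw [h0, zero_mul] at e3'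
      exact (by norm_num : (0 : ℂ) ≠ -1) e3'
    have key4 := chain_key4 hdetC hpqC hz3' e3' hden2 hz4c
    have hwz4 : (w : ℂ) = (z4 : ℂ) := by
      rw [hw]
      apply mul_left_cancel₀ hNC
      rw [key4, hts]
      push_cast
      field_simp
    have hwz : w = z4 := UpperHalfPlane.ext hwz4
    rw [hwz, h4, h3, h2, h1]
    have hscal := chain_scalar hε hNC hzne hden1 hz2ne hden1' hnum2 e1' e2' e3'
    linear_combination (f z) * hscal
  -- endgame
  by_cases hsum : ∃ z₀ : UpperHalfPlane,
      Summable fun n : ℕ => a n * Complex.exp (2 * Real.pi * Complex.I * n * (z₀ : ℂ))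
  · obtain ⟨z₀, hs⟩ := hsum
    obtain ⟨k, hk⟩ := t_is_int a ha0 ha1 (⇑f) hfa z₀ hs t htrans
    have hNR : (N : ℝ) ≠ 0 := Nat.cast_ne_zero.mpr (by omega)
    have hZ : (p * c : ℤ) = (N : ℤ) * (q * a0 - k) := by
      have hR : ((p * c : ℤ) : ℝ) = ((N : ℤ) : ℝ) * (((q * a0 - k : ℤ)) : ℝ) := by
        rw [hts] at hk
        push_cast at hk ⊢
        field_simp at hk
        linarith
      exact_mod_cast hR
    have hdvdpc : (N : ℤ) ∣ p * c := ⟨q * a0 - k, hZ⟩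
    have hcopN : IsCoprime (N : ℤ) p := ⟨-(q * b'), d', by linear_combination hpq⟩
    exact hcopN.dvd_of_dvd_mul_left hdvdpc
  · exfalso
    apply hnew
    have hf0 : ⇑f = 0 := by
      funext z
      rw [hfa z, tsum_eq_zero_of_not_summable (fun hs' => hsum ⟨z, hs'⟩)]
      rfl
    rw [hf0]
    exact Submodule.zero_mem _
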